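/- Let G be a finite group, H ≤ M ≤ G subgroups such that H contains a Sylow p-subgroup S of G with N_G(S) ≤ M. If H is pronormal in M, then H is pronormal in G. -/

import Mathlib

/-- The conjugate subgroup `H^g = g H g⁻¹` (conjugation by `g`). -/
def conjSub {G : Type*} [Group G] (g : G) (H : Subgroup G) : Subgroup G :=
  H.map (MulAut.conj g).toMonoidHom

/-- A subgroup `H` of `G` is pronormal in `G` if for every `g ∈ G` the subgroups `H` and
`H^g` are conjugate by an element of `⟨H, H^g⟩`. -/
def IsPronormal {G : Type*} [Group G] (H : Subgroup G) : Prop :=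
  ∀ g : G, ∃ x ∈ H ⊔ conjSub g H, conjSub x H = conjSub g H

open Pointwise

lemma mem_conjSub {G : Type*} [Group G] {g y : G} {H : Subgroup G} :
    y ∈ conjSub g H ↔ ∃ h ∈ H, g * h * g⁻¹ = y := by
  simp [conjSub, Subgroup.mem_map, MulAut.conj]

lemma conjSub_mul {G : Type*} [Group G] (a b : G) (K : Subgroup G) :
    conjSub (a * b) K = conjSub a (conjSub b K) := by
  ext x
  simp only [mem_conjSub]
  constructor
  · rintro ⟨k, hk, rfl⟩
    exact ⟨b * k * b⁻¹, ⟨k, hk, rfl⟩, by group⟩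
  · rintro ⟨z, ⟨k, hk, rfl⟩, rfl⟩
    exact ⟨k, hk, by group⟩

lemma conjSub_eq_smul {G : Type*} [Group G] (g : G) (H : Subgroup G) :
    conjSub g H = MulAut.conj g • H := rfl

lemma conjSub_mono {G : Type*} [Group G] (g : G) {K K' : Subgroup G} (h : K ≤ K') :
    conjSub g K ≤ conjSub g K' := Subgroup.map_mono h

lemma conjSub_le {G : Type*} [Group G] {g : G} {K L : Subgroup G}
    (hg : g ∈ L) (hK : K ≤ L) : conjSub g K ≤ L := by
  intro y hy
  obtain ⟨k, hk, rfl⟩ := mem_conjSub.mp hy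
  exact mul_mem (mul_mem hg (hK hk)) (inv_mem hg)

lemma map_subtype_conjSub {G : Type*} [Group G] (M : Subgroup G) (x : M) (K : Subgroup M) :
    (conjSub x K).map M.subtype = conjSub (x : G) (K.map M.subtype) := by
  ext y
  constructor
  · rintro ⟨z, hz, rfl⟩
    obtain ⟨k, hk, rfl⟩ := mem_conjSub.mp hz
    exact mem_conjSub.mpr ⟨(k : G), ⟨k, hk, rfl⟩, rfl⟩
  · rintro hy
    obtain ⟨k, ⟨k', hk', rfl⟩, rfl⟩ := mem_conjSub.mp hy
    exact ⟨x * k' * x⁻¹, mem_conjSub.mpr ⟨k', hk', rfl⟩, rfl⟩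

/-- Let `H ≤ M ≤ G` with `H` containing a Sylow `p`-subgroup `S` of `G`
such that `N_G(S) ≤ M`. If `H` is pronormal in `M`, then `H` is pronormal in `G`. -/
theorem stmt10 {G : Type*} [Group G] [Finite G] {p : ℕ} [Fact p.Prime]
    (H M : Subgroup G) (hHM : H ≤ M) (S : Sylow p G) (hS : (S : Subgroup G) ≤ H)
    (hN : Subgroup.normalizer ((S : Subgroup G) : Set G) ≤ M)
    (h : IsPronormal (H.subgroupOf M)) : IsPronormal H := by
  intro g
  set L := H ⊔ conjSub g H with hL
  have hHL : H ≤ L := le_sup_left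
  have hSL : (S : Subgroup G) ≤ L := hS.trans hHL
  have hgS : ((g • S : Sylow p G) : Subgroup G) = conjSub g (S : Subgroup G) := rfl
  have hgSL : ((g • S : Sylow p G) : Subgroup G) ≤ L := by
    rw [hgS]
    exact (conjSub_mono g hS).trans le_sup_right
  obtain ⟨l, hl⟩ := MulAction.exists_smul_eq L ((g • S).subtype hgSL) (S.subtype hSL)
  rw [Sylow.smul_subtype] at hl
  have hl' : (l : G) • (g • S) = S := Sylow.subtype_injective hl
  have hmem : (l : G) * g ∈ Subgroup.normalizer ((S : Subgroup G) : Set G) := by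
    exact Sylow.smul_eq_iff_mem_normalizer.mp (by rw [mul_smul, hl'])
  have hmM : (l : G) * g ∈ M := hN hmem
  set m : M := ⟨(l : G) * g, hmM⟩ with hm
  obtain ⟨x, hx, hconj⟩ := h m
  -- map the conjugacy up to G
  have hmapH : (H.subgroupOf M).map M.subtype = H := by
    rw [Subgroup.subgroupOf_map_subtype, inf_eq_left.mpr hHM]
  have hconjG : conjSub (x : G) H = conjSub ((l : G) * g) H := by
    have := congrArg (Subgroup.map M.subtype) hconj
    rwa [map_subtype_conjSub, map_subtype_conjSub, hmapH] at this
  have hxL : (x : G) ∈ L := by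
    have hx' : (x : G) ∈ (H.subgroupOf M ⊔ conjSub m (H.subgroupOf M)).map M.subtype :=
      ⟨x, hx, rfl⟩
    rw [Subgroup.map_sup, map_subtype_conjSub, hmapH] at hx'
    have hsub : H ⊔ conjSub ((m : G)) H ≤ L := by
      refine sup_le hHL ?_
      rw [show ((m : G)) = (l : G) * g from rfl, conjSub_mul]
      exact conjSub_le l.2 le_sup_right
    exact hsub hx'
  refine ⟨(l : G)⁻¹ * (x : G), mul_mem (inv_mem l.2) hxL, ?_⟩
  rw [conjSub_mul, hconjG, conjSub_mul, ← conjSub_mul, inv_mul_cancel]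
  ext y
  simp [mem_conjSub]
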